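/- The fractional parabolic maximal operator M_0 is bounded on the fractional parabolic Morrey space M^{p,λ}: for 1 < p < ∞ and 0 < λ ≤ n+2a, there is C = C(n,a,p,λ) such that ‖M_0 f‖_{M^{p,λ}} ≤ C ‖f‖_{M^{p,λ}} for all f ∈ M^{p,λ}(ℝ^{n+1}). -/

import Mathlib

open MeasureTheory
open scoped ENNReal
open Metric Set

noncomputable section

def pdist (a : ℝ) {n : ℕ} (z w : EuclideanSpace ℝ (Fin n) × ℝ) : ℝ :=
  max (dist z.1 w.1) (|z.2 - w.2| ^ ((1 : ℝ) / (2 * a)))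

def Qcyl (a : ℝ) {n : ℕ} (r : ℝ) (z : EuclideanSpace ℝ (Fin n) × ℝ) :
    Set (EuclideanSpace ℝ (Fin n) × ℝ) :=
  {w | pdist a z w < r}

def maxOp (a α : ℝ) {n : ℕ} (f : EuclideanSpace ℝ (Fin n) × ℝ → ℝ)
    (z : EuclideanSpace ℝ (Fin n) × ℝ) : ℝ :=
  ⨆ r : {r : ℝ // 0 < r}, (r : ℝ) ^ α * ⨍ w in Qcyl a r z, |f w|

/-- The fractional parabolic Morrey norm
`‖f‖_{M^{p,λ}} = (sup_{r>0,z} r^{λ-(n+2a)} ∫_{Q_r(z)} |f|^p)^{1/p}`. -/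
def morreyNorm (a p lam : ℝ) {n : ℕ} (f : EuclideanSpace ℝ (Fin n) × ℝ → ℝ) : ℝ≥0∞ :=
  (⨆ (r : ℝ) (_ : 0 < r) (z : EuclideanSpace ℝ (Fin n) × ℝ),
      ENNReal.ofReal (r ^ (lam - ((n : ℝ) + 2 * a))) *
        ∫⁻ w in Qcyl a r z, ENNReal.ofReal (|f w| ^ p)) ^ (1 / p)

namespace MorreyAux

variable {n : ℕ} {a : ℝ}

lemma rpow_lt_iff {x r c : ℝ} (hx : 0 ≤ x) (hr : 0 < r) (hc : 0 < c) :
    x ^ (1/c) < r ↔ x < r ^ c := by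
  constructor
  · intro h
    have h2 : (x ^ (1/c)) ^ c < r ^ c := Real.rpow_lt_rpow (Real.rpow_nonneg hx _) h hc
    rwa [← Real.rpow_mul hx, one_div, inv_mul_cancel₀ hc.ne', Real.rpow_one] at h2
  · intro h
    have h2 : x ^ (1/c) < (r ^ c) ^ (1/c) :=
      Real.rpow_lt_rpow hx h (by positivity)
    rwa [← Real.rpow_mul hr.le, mul_one_div, div_self hc.ne', Real.rpow_one] at h2

lemma mem_Qcyl (ha : 0 < a) {r : ℝ} (hr : 0 < r) {z w : EuclideanSpace ℝ (Fin n) × ℝ} :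
    w ∈ Qcyl a r z ↔ dist z.1 w.1 < r ∧ |z.2 - w.2| < r ^ (2*a) := by
  have := rpow_lt_iff (abs_nonneg (z.2 - w.2)) hr (by positivity : (0:ℝ) < 2*a)
  simp only [Qcyl, pdist, mem_setOf_eq, max_lt_iff]
  exact and_congr Iff.rfl this

lemma Qcyl_mono {r r' : ℝ} (h : r ≤ r') (z : EuclideanSpace ℝ (Fin n) × ℝ) :
    Qcyl a r z ⊆ Qcyl a r' z := fun w hw => lt_of_lt_of_le hw h

lemma mem_Qcyl_comm {r : ℝ} {z w : EuclideanSpace ℝ (Fin n) × ℝ} :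
    w ∈ Qcyl a r z ↔ z ∈ Qcyl a r w := by
  simp only [Qcyl, pdist, mem_setOf_eq, dist_comm, abs_sub_comm]

lemma self_mem_Qcyl (ha : 0 < a) {r : ℝ} (hr : 0 < r) (z : EuclideanSpace ℝ (Fin n) × ℝ) :
    z ∈ Qcyl a r z := by
  rw [mem_Qcyl ha hr]
  refine ⟨by simpa using hr, ?_⟩
  simpa using Real.rpow_pos_of_pos hr _

lemma Qcyl_eq_prod (ha : 0 < a) {r : ℝ} (hr : 0 < r) (z : EuclideanSpace ℝ (Fin n) × ℝ) :
    Qcyl a r z = ball z.1 r ×ˢ ball z.2 (r ^ (2*a)) := by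
  ext w
  rw [mem_Qcyl ha hr, mem_prod, mem_ball, mem_ball, dist_comm, Real.dist_eq, abs_sub_comm]

lemma measurableSet_Qcyl (ha : 0 < a) {r : ℝ} (hr : 0 < r) (z : EuclideanSpace ℝ (Fin n) × ℝ) :
    MeasurableSet (Qcyl a r z) := by
  rw [Qcyl_eq_prod ha hr]
  exact (isOpen_ball.prod isOpen_ball).measurableSet

/-- The quasi-triangle engulfing constant. -/
def kap (a : ℝ) : ℝ := 2 ^ (1/(2*a))

lemma one_le_kap (ha : 0 < a) : 1 ≤ kap a :=
  Real.one_le_rpow one_le_two (by positivity)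

lemma kap_pos (ha : 0 < a) : 0 < kap a := lt_of_lt_of_le one_pos (one_le_kap ha)

lemma kap_rpow (ha : 0 < a) : (kap a) ^ (2*a) = 2 := by
  rw [kap, ← Real.rpow_mul (by norm_num : (0:ℝ) ≤ 2), one_div,
    inv_mul_cancel₀ (by positivity : (2*a) ≠ 0), Real.rpow_one]

lemma Qcyl_engulf (ha : 0 < a) {r ρ : ℝ} (hr : 0 < r) (hρ : 0 < ρ)
    {z w : EuclideanSpace ℝ (Fin n) × ℝ} (hw : w ∈ Qcyl a r z) :
    Qcyl a ρ w ⊆ Qcyl a (kap a * (r + ρ)) z := by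
  intro u hu
  rw [mem_Qcyl ha hρ] at hu
  rw [mem_Qcyl ha hr] at hw
  have hk := kap_pos ha
  have hkr : 0 < kap a * (r + ρ) := by positivity
  rw [mem_Qcyl ha hkr]
  constructor
  · calc dist z.1 u.1 ≤ dist z.1 w.1 + dist w.1 u.1 := dist_triangle _ _ _
      _ < r + ρ := add_lt_add hw.1 hu.1
      _ ≤ kap a * (r + ρ) := le_mul_of_one_le_left (by positivity) (one_le_kap ha)
  · have h1 : r ^ (2*a) ≤ (r+ρ) ^ (2*a) :=
      Real.rpow_le_rpow hr.le (by linarith) (by positivity)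
    have h2 : ρ ^ (2*a) ≤ (r+ρ) ^ (2*a) :=
      Real.rpow_le_rpow hρ.le (by linarith) (by positivity)
    have h3 : (kap a * (r + ρ)) ^ (2*a) = 2 * (r+ρ) ^ (2*a) := by
      rw [Real.mul_rpow hk.le (by positivity), kap_rpow ha]
    calc |z.2 - u.2| ≤ |z.2 - w.2| + |w.2 - u.2| := abs_sub_le _ _ _
      _ < r ^ (2*a) + ρ ^ (2*a) := add_lt_add hw.2 hu.2
      _ ≤ 2 * (r+ρ) ^ (2*a) := by linarith
      _ = (kap a * (r + ρ)) ^ (2*a) := h3.symm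

/-- Vitali enlargement constant. -/
def Cvit (a : ℝ) : ℝ := kap a * (1 + 4 * kap a)

lemma Cvit_pos (ha : 0 < a) : 0 < Cvit a := by
  have := kap_pos ha; unfold Cvit; positivity

lemma Qcyl_subset_of_inter (ha : 0 < a) {r r' : ℝ} (hr : 0 < r) (hr' : 0 < r')
    (hrr' : r ≤ 2 * r') {z z' : EuclideanSpace ℝ (Fin n) × ℝ}
    (hint : (Qcyl a r z ∩ Qcyl a r' z').Nonempty) :
    Qcyl a r z ⊆ Qcyl a (Cvit a * r') z' := by
  obtain ⟨u, huz, huz'⟩ := hint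
  have hk := kap_pos ha
  have h1 : Qcyl a r z ⊆ Qcyl a (kap a * (r + r)) u :=
    Qcyl_engulf ha hr hr (mem_Qcyl_comm.1 huz)
  have h2 : Qcyl a (kap a * (r + r)) u ⊆ Qcyl a (kap a * (r' + kap a * (r + r))) z' :=
    Qcyl_engulf ha hr' (by positivity) huz'
  refine h1.trans (h2.trans (Qcyl_mono ?_ _))
  have hk1 := one_le_kap ha
  have key : r' + kap a * (r + r) ≤ (1 + 4 * kap a) * r' := by nlinarith
  calc kap a * (r' + kap a * (r + r)) ≤ kap a * ((1 + 4 * kap a) * r') :=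
        mul_le_mul_of_nonneg_left key hk.le
    _ = Cvit a * r' := by unfold Cvit; ring



/-- normalizing constant -/
def Kc (n : ℕ) : ℝ≥0∞ :=
  volume (ball (0 : EuclideanSpace ℝ (Fin n)) 1) * ENNReal.ofReal 2

lemma Kc_ne_zero : Kc n ≠ 0 := by
  have h1 : volume (ball (0 : EuclideanSpace ℝ (Fin n)) 1) ≠ 0 :=
    (measure_ball_pos volume (0 : EuclideanSpace ℝ (Fin n)) one_pos).ne'
  simp [Kc, h1]

lemma Kc_ne_top : Kc n ≠ ∞ := by
  have h1 : volume (ball (0 : EuclideanSpace ℝ (Fin n)) 1) ≠ ∞ :=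
    (measure_ball_lt_top).ne
  exact ENNReal.mul_ne_top h1 (by simp)

lemma volume_ball_eu (x : EuclideanSpace ℝ (Fin n)) {r : ℝ} (hr : 0 < r) :
    volume (ball x r) =
      ENNReal.ofReal (r ^ (n:ℝ)) * volume (ball (0 : EuclideanSpace ℝ (Fin n)) 1) := by
  cases n with
  | zero =>
    have huniv : ∀ (y : EuclideanSpace ℝ (Fin 0)) (s : ℝ), 0 < s → ball y s = univ := by
      intro y s hs
      ext w
      simp [mem_ball, Subsingleton.elim w y, hs]
    rw [huniv x r hr, huniv 0 1 one_pos]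
    simp [Real.rpow_zero]
  | succ m =>
    haveI : Nontrivial (EuclideanSpace ℝ (Fin (m+1))) := by
      refine ⟨0, EuclideanSpace.single 0 1, fun h => ?_⟩
      have := congrArg (fun v => v 0) h
      simp [EuclideanSpace.single_apply] at this
    rw [Measure.addHaar_ball volume x hr.le, finrank_euclideanSpace_fin, ← Real.rpow_natCast r (m+1)]

lemma volume_Qcyl {a : ℝ} (ha : 0 < a) {r : ℝ} (hr : 0 < r)
    (z : EuclideanSpace ℝ (Fin n) × ℝ) :
    volume (Qcyl a r z) = ENNReal.ofReal (r ^ ((n:ℝ) + 2*a)) * Kc n := by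
  rw [Qcyl_eq_prod ha hr, Measure.volume_eq_prod, Measure.prod_prod,
    volume_ball_eu z.1 hr, Real.volume_ball]
  have h1 : (0:ℝ) ≤ r ^ (2*a) := Real.rpow_nonneg hr.le _
  have h2 : r ^ ((n:ℝ) + 2*a) = r ^ (n:ℝ) * r ^ (2*a) := Real.rpow_add hr _ _
  rw [h2, ENNReal.ofReal_mul (by norm_num : (0:ℝ) ≤ 2),
    ENNReal.ofReal_mul (Real.rpow_nonneg hr.le _), Kc]
  ring

lemma volume_Qcyl_ne_zero {a : ℝ} (ha : 0 < a) {r : ℝ} (hr : 0 < r)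
    (z : EuclideanSpace ℝ (Fin n) × ℝ) : volume (Qcyl a r z) ≠ 0 := by
  rw [volume_Qcyl ha hr z]
  have : (0:ℝ) < r ^ ((n:ℝ) + 2*a) := Real.rpow_pos_of_pos hr _
  exact mul_ne_zero (by simp [ENNReal.ofReal_eq_zero, not_le, this]) Kc_ne_zero

lemma volume_Qcyl_ne_top {a : ℝ} (ha : 0 < a) {r : ℝ} (hr : 0 < r)
    (z : EuclideanSpace ℝ (Fin n) × ℝ) : volume (Qcyl a r z) ≠ ∞ := by
  rw [volume_Qcyl ha hr z]
  exact ENNReal.mul_ne_top ENNReal.ofReal_ne_top Kc_ne_top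


/-- extended-real average over a cylinder -/
def avgE (a : ℝ) {n : ℕ} (g : EuclideanSpace ℝ (Fin n) × ℝ → ℝ≥0∞) (r : ℝ)
    (z : EuclideanSpace ℝ (Fin n) × ℝ) : ℝ≥0∞ :=
  (volume (Qcyl a r z))⁻¹ * ∫⁻ w in Qcyl a r z, g w

/-- maximal operator over rational radii -/
def ME (a : ℝ) {n : ℕ} (g : EuclideanSpace ℝ (Fin n) × ℝ → ℝ≥0∞)
    (z : EuclideanSpace ℝ (Fin n) × ℝ) : ℝ≥0∞ :=
  ⨆ q : {q : ℚ // 0 < q}, avgE a g ((q : ℚ) : ℝ) z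

lemma continuous_pdist_pair (ha : 0 < a) :
    Continuous (fun p : (EuclideanSpace ℝ (Fin n) × ℝ) × (EuclideanSpace ℝ (Fin n) × ℝ) =>
      pdist a p.1 p.2) := by
  unfold pdist
  apply Continuous.max
  · exact Continuous.dist (continuous_fst.fst) (continuous_snd.fst)
  · exact ((continuous_fst.snd.sub continuous_snd.snd).abs).rpow_const
      (fun p => Or.inr (by positivity))

lemma measurable_lint (ha : 0 < a) {r : ℝ} (hr : 0 < r)
    {g : EuclideanSpace ℝ (Fin n) × ℝ → ℝ≥0∞} (hg : Measurable g) :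
    Measurable (fun z => ∫⁻ w in Qcyl a r z, g w) := by
  have h1 : ∀ z : EuclideanSpace ℝ (Fin n) × ℝ,
      ∫⁻ w in Qcyl a r z, g w = ∫⁻ w, (Qcyl a r z).indicator g w := fun z =>
    (lintegral_indicator (measurableSet_Qcyl ha hr z) g).symm
  simp_rw [h1]
  apply Measurable.lintegral_prod_right (f := fun z w => (Qcyl a r z).indicator g w)
  have hS : MeasurableSet {p : (EuclideanSpace ℝ (Fin n) × ℝ) × (EuclideanSpace ℝ (Fin n) × ℝ) |
      pdist a p.1 p.2 < r} :=
    measurableSet_lt (continuous_pdist_pair ha).measurable measurable_const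
  have h2 : (Function.uncurry fun z w => (Qcyl a r z).indicator g w) =
      Set.indicator {p : (EuclideanSpace ℝ (Fin n) × ℝ) × (EuclideanSpace ℝ (Fin n) × ℝ) |
        pdist a p.1 p.2 < r} (fun p => g p.2) := by
    ext p
    by_cases hp : pdist a p.1 p.2 < r
    · rw [Function.uncurry]
      rw [Set.indicator_of_mem (by exact hp), Set.indicator_of_mem (by exact hp)]
    · rw [Function.uncurry]
      rw [Set.indicator_of_notMem (by exact hp), Set.indicator_of_notMem (by exact hp)]
  rw [h2]
  exact (hg.comp measurable_snd).indicator hS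

lemma measurable_avgE (ha : 0 < a) {r : ℝ} (hr : 0 < r)
    {g : EuclideanSpace ℝ (Fin n) × ℝ → ℝ≥0∞} (hg : Measurable g) :
    Measurable (fun z => avgE a g r z) := by
  have h1 : ∀ z : EuclideanSpace ℝ (Fin n) × ℝ, avgE a g r z =
      (ENNReal.ofReal (r ^ ((n:ℝ) + 2*a)) * Kc n)⁻¹ * ∫⁻ w in Qcyl a r z, g w := by
    intro z; rw [avgE, volume_Qcyl ha hr z]
  simp_rw [h1]
  exact (measurable_lint ha hr hg).const_mul _

lemma measurable_ME (ha : 0 < a) {g : EuclideanSpace ℝ (Fin n) × ℝ → ℝ≥0∞}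
    (hg : Measurable g) : Measurable (ME a g) := by
  apply Measurable.iSup
  rintro ⟨q, hq⟩
  exact measurable_avgE ha (by exact_mod_cast hq) hg

lemma avgE_le_double (ha : 0 < a) {ρ q : ℝ} (hρ : 0 < ρ) (hq1 : ρ ≤ q) (hq2 : q ≤ 2*ρ)
    {g : EuclideanSpace ℝ (Fin n) × ℝ → ℝ≥0∞} (z : EuclideanSpace ℝ (Fin n) × ℝ) :
    avgE a g ρ z ≤ ENNReal.ofReal (2 ^ ((n:ℝ) + 2*a)) * avgE a g q z := by
  have hqpos : 0 < q := lt_of_lt_of_le hρ hq1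
  set d := (n:ℝ) + 2*a with hd
  have hInt : ∫⁻ w in Qcyl a ρ z, g w ≤ ∫⁻ w in Qcyl a q z, g w :=
    lintegral_mono_set (Qcyl_mono hq1 z)
  have hcoef : (volume (Qcyl a ρ z))⁻¹ ≤
      ENNReal.ofReal (2 ^ d) * (volume (Qcyl a q z))⁻¹ := by
    rw [volume_Qcyl ha hρ z, volume_Qcyl ha hqpos z]
    have hxne : ENNReal.ofReal (2 ^ d) ≠ 0 := by
      simp [ENNReal.ofReal_eq_zero, not_le]
      positivity
    have hxnetop : ENNReal.ofReal (2 ^ d) ≠ ∞ := ENNReal.ofReal_ne_top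
    have hvol : ENNReal.ofReal (q ^ d) * Kc n ≤
        ENNReal.ofReal (2 ^ d) * (ENNReal.ofReal (ρ ^ d) * Kc n) := by
      rw [← mul_assoc, ← ENNReal.ofReal_mul (by positivity)]
      apply mul_le_mul_left (ENNReal.ofReal_le_ofReal _)
      calc q ^ d ≤ (2*ρ) ^ d := Real.rpow_le_rpow hqpos.le hq2 (by positivity)
        _ = 2 ^ d * ρ ^ d := Real.mul_rpow (by norm_num) hρ.le
    calc (ENNReal.ofReal (ρ ^ d) * Kc n)⁻¹
        = ENNReal.ofReal (2 ^ d) * ((ENNReal.ofReal (2 ^ d)) *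
            (ENNReal.ofReal (ρ ^ d) * Kc n))⁻¹ := by
          rw [ENNReal.mul_inv (Or.inl hxne) (Or.inl hxnetop), ← mul_assoc,
            ENNReal.mul_inv_cancel hxne hxnetop, one_mul]
      _ ≤ ENNReal.ofReal (2 ^ d) * (ENNReal.ofReal (q ^ d) * Kc n)⁻¹ :=
          mul_le_mul_right (ENNReal.inv_le_inv.2 hvol) _
  calc avgE a g ρ z ≤ (volume (Qcyl a ρ z))⁻¹ * ∫⁻ w in Qcyl a q z, g w :=
        mul_le_mul_right hInt _
    _ ≤ (ENNReal.ofReal (2 ^ d) * (volume (Qcyl a q z))⁻¹) * ∫⁻ w in Qcyl a q z, g w :=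
        mul_le_mul_left hcoef _
    _ = ENNReal.ofReal (2 ^ d) * avgE a g q z := by rw [avgE, mul_assoc]

lemma avgE_le_holder (ha : 0 < a) {r p : ℝ} (hr : 0 < r) (hp : 1 < p)
    {g : EuclideanSpace ℝ (Fin n) × ℝ → ℝ≥0∞} (hg : Measurable g)
    (z : EuclideanSpace ℝ (Fin n) × ℝ) :
    avgE a g r z ≤
      ((volume (Qcyl a r z))⁻¹ * ∫⁻ w in Qcyl a r z, (g w) ^ p) ^ (1/p) := by
  set Q := Qcyl a r z
  set ν : Measure (EuclideanSpace ℝ (Fin n) × ℝ) := (volume Q)⁻¹ • volume.restrict Q with hν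
  have hμ0 : volume Q ≠ 0 := volume_Qcyl_ne_zero ha hr z
  have hμtop : volume Q ≠ ∞ := volume_Qcyl_ne_top ha hr z
  have hpq : p.HolderConjugate (Real.conjExponent p) := Real.HolderConjugate.conjExponent hp
  have h := ENNReal.lintegral_mul_le_Lp_mul_Lq ν hpq hg.aemeasurable
    (aemeasurable_const : AEMeasurable (fun _ => (1:ℝ≥0∞)) ν)
  simp only [Pi.mul_apply, mul_one] at h
  have hone : ∫⁻ w, (1:ℝ≥0∞) ^ Real.conjExponent p ∂ν = 1 := by
    simp only [ENNReal.one_rpow, lintegral_one, hν, Measure.smul_apply,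
      Measure.restrict_apply_univ, smul_eq_mul]
    exact ENNReal.inv_mul_cancel hμ0 hμtop
  rw [hone, ENNReal.one_rpow, mul_one] at h
  have hL : ∫⁻ w, g w ∂ν = avgE a g r z := by
    rw [hν, lintegral_smul_measure]; rfl
  have hR : ∫⁻ w, g w ^ p ∂ν = (volume Q)⁻¹ * ∫⁻ w in Q, (g w) ^ p := by
    rw [hν, lintegral_smul_measure, smul_eq_mul]
  rw [hL, hR] at h
  exact h

lemma maxOp_nonneg (a : ℝ) (f : EuclideanSpace ℝ (Fin n) × ℝ → ℝ)
    (z : EuclideanSpace ℝ (Fin n) × ℝ) : 0 ≤ maxOp a 0 f z := by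
  apply Real.iSup_nonneg
  rintro ⟨r, hr⟩
  have : (0:ℝ) ≤ ⨍ w in Qcyl a r z, |f w| :=
    integral_nonneg (fun w => abs_nonneg _)
  positivity

lemma ofReal_maxOp_le (ha : 0 < a) {f : EuclideanSpace ℝ (Fin n) × ℝ → ℝ}
    (z : EuclideanSpace ℝ (Fin n) × ℝ) :
    ENNReal.ofReal (maxOp a 0 f z) ≤
      ENNReal.ofReal (2 ^ ((n:ℝ) + 2*a)) * ME a (fun w => ENNReal.ofReal (|f w|)) z := by
  set F : EuclideanSpace ℝ (Fin n) × ℝ → ℝ≥0∞ := fun w => ENNReal.ofReal (|f w|) with hF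
  set R : ℝ≥0∞ := ENNReal.ofReal (2 ^ ((n:ℝ) + 2*a)) * ME a F z with hR
  by_cases htop : R = ∞
  · rw [htop]; exact le_top
  -- each term of the real sup is at most `R.toReal`
  have key : ∀ ρ : {r : ℝ // 0 < r},
      (ρ : ℝ) ^ (0:ℝ) * ⨍ w in Qcyl a (ρ:ℝ) z, |f w| ≤ R.toReal := by
    rintro ⟨ρ, hρ⟩
    have havg0 : (0:ℝ) ≤ ⨍ w in Qcyl a ρ z, |f w| := integral_nonneg (fun w => abs_nonneg _)
    have step1 : ENNReal.ofReal (⨍ w in Qcyl a ρ z, |f w|) ≤ avgE a F ρ z := by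
      by_cases hInt : Integrable (fun w => |f w|) (volume.restrict (Qcyl a ρ z))
      · rw [setAverage_eq]
        have hμ0 : volume (Qcyl a ρ z) ≠ 0 := volume_Qcyl_ne_zero ha hρ z
        have hμtop : volume (Qcyl a ρ z) ≠ ∞ := volume_Qcyl_ne_top ha hρ z
        rw [smul_eq_mul, ENNReal.ofReal_mul (by positivity)]
        have h1 : ENNReal.ofReal ((volume.real (Qcyl a ρ z))⁻¹) =
            (volume (Qcyl a ρ z))⁻¹ := by
          rw [measureReal_def, ← ENNReal.toReal_inv, ENNReal.ofReal_toReal (ENNReal.inv_ne_top.2 hμ0)]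
        have h2 : ENNReal.ofReal (∫ w in Qcyl a ρ z, |f w|) =
            ∫⁻ w in Qcyl a ρ z, F w :=
          ofReal_integral_eq_lintegral_ofReal hInt
            (Filter.Eventually.of_forall fun w => abs_nonneg _)
        rw [h1, h2]
        rfl
      · rw [setAverage_eq', integral_undef, ENNReal.ofReal_zero]
        · exact zero_le
        · intro hcon
          apply hInt
          have hμ0 : volume (Qcyl a ρ z) ≠ 0 := volume_Qcyl_ne_zero ha hρ z
          have hμtop : volume (Qcyl a ρ z) ≠ ∞ := volume_Qcyl_ne_top ha hρ z
          rw [← integrable_smul_measure (ENNReal.inv_ne_zero.2 hμtop) (ENNReal.inv_ne_top.2 hμ0)]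
          exact hcon
    obtain ⟨q, hq1, hq2⟩ := exists_rat_btwn (lt_two_mul_self hρ)
    have hqρ : (ρ:ℝ) ≤ (q:ℝ) := hq1.le
    have hqpos : (0:ℚ) < q := by exact_mod_cast lt_of_lt_of_le hρ hqρ
    have step2 : avgE a F ρ z ≤ ENNReal.ofReal (2 ^ ((n:ℝ) + 2*a)) * avgE a F (q:ℝ) z :=
      avgE_le_double ha hρ hqρ hq2.le z
    have step3 : avgE a F (q:ℝ) z ≤ ME a F z :=
      le_iSup (fun q : {q : ℚ // 0 < q} => avgE a F ((q:ℚ):ℝ) z) ⟨q, hqpos⟩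
    have : ENNReal.ofReal ((ρ:ℝ) ^ (0:ℝ) * ⨍ w in Qcyl a ρ z, |f w|) ≤ R := by
      rw [Real.rpow_zero, one_mul]
      exact step1.trans (step2.trans (mul_le_mul_right step3 _))
    have h5 : (ρ:ℝ) ^ (0:ℝ) * ⨍ w in Qcyl a ρ z, |f w| =
        (ENNReal.ofReal ((ρ:ℝ) ^ (0:ℝ) * ⨍ w in Qcyl a ρ z, |f w|)).toReal := by
      rw [ENNReal.toReal_ofReal (by rw [Real.rpow_zero, one_mul]; exact havg0)]
    rw [h5]
    exact ENNReal.toReal_mono htop this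
  have hsup : maxOp a 0 f z ≤ R.toReal := Real.iSup_le key ENNReal.toReal_nonneg
  calc ENNReal.ofReal (maxOp a 0 f z) ≤ ENNReal.ofReal R.toReal :=
        ENNReal.ofReal_le_ofReal hsup
    _ = R := ENNReal.ofReal_toReal htop

lemma scale_Qcyl (ha : 0 < a) {c ρ : ℝ} (hc : 0 < c) (hρ : 0 < ρ)
    (z : EuclideanSpace ℝ (Fin n) × ℝ) :
    volume (Qcyl a (c * ρ) z) =
      ENNReal.ofReal (c ^ ((n:ℝ) + 2*a)) * volume (Qcyl a ρ z) := by
  rw [volume_Qcyl ha (by positivity) z, volume_Qcyl ha hρ z,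
    Real.mul_rpow hc.le hρ.le, ENNReal.ofReal_mul (by positivity), mul_assoc]

theorem weak_type (ha : 0 < a) {g : EuclideanSpace ℝ (Fin n) × ℝ → ℝ≥0∞}
    {t : ℝ≥0∞} (ht0 : t ≠ 0) (httop : t ≠ ∞) :
    volume {z : EuclideanSpace ℝ (Fin n) × ℝ | t < ME a g z} ≤
      ENNReal.ofReal ((Cvit a) ^ ((n:ℝ) + 2*a)) * t⁻¹ * ∫⁻ w, g w := by
  set d := (n:ℝ) + 2*a with hd
  set T := ∫⁻ w, g w with hT
  have hCv : (0:ℝ) < (Cvit a) ^ d := Real.rpow_pos_of_pos (Cvit_pos ha) _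
  by_cases hTtop : T = ∞
  · have h1 : ENNReal.ofReal ((Cvit a) ^ d) * t⁻¹ ≠ 0 :=
      mul_ne_zero (by simpa [ENNReal.ofReal_eq_zero, not_le] using hCv)
        (ENNReal.inv_ne_zero.2 httop)
    rw [mul_assoc, hTtop, ENNReal.mul_top (ENNReal.inv_ne_zero.2 httop)]
    rw [ENNReal.mul_top (by simpa [ENNReal.ofReal_eq_zero, not_le] using hCv)]
    exact le_top
  set S := {z : EuclideanSpace ℝ (Fin n) × ℝ | t < ME a g z} with hS
  set Rb : ℝ := ((T * (Kc n)⁻¹ * t⁻¹).toReal + 1) ^ (1/d) with hRb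
  have hdpos : 0 < d := by positivity
  -- radius selection
  have hsel : ∀ z : EuclideanSpace ℝ (Fin n) × ℝ, ∃ q : ℝ, 0 < q ∧ q ≤ max Rb 1 ∧
      (z ∈ S → t * volume (Qcyl a q z) ≤ ∫⁻ w in Qcyl a q z, g w) := by
    intro z
    by_cases hz : z ∈ S
    · have hz' : t < ⨆ q : {q : ℚ // 0 < q}, avgE a g ((q:ℚ):ℝ) z := hz
      rw [lt_iSup_iff] at hz'
      obtain ⟨⟨q0, hq0⟩, hlt⟩ := hz'
      set q : ℝ := ((q0 : ℚ) : ℝ) with hq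
      have hqpos : 0 < q := by rw [hq]; exact_mod_cast hq0
      have hμ0 : volume (Qcyl a q z) ≠ 0 := volume_Qcyl_ne_zero ha hqpos z
      have hμtop : volume (Qcyl a q z) ≠ ∞ := volume_Qcyl_ne_top ha hqpos z
      have hineq : t * volume (Qcyl a q z) ≤ ∫⁻ w in Qcyl a q z, g w := by
        calc t * volume (Qcyl a q z)
            ≤ avgE a g q z * volume (Qcyl a q z) := mul_le_mul_left hlt.le _
          _ = ∫⁻ w in Qcyl a q z, g w := by
              rw [avgE, mul_comm ((volume (Qcyl a q z))⁻¹), mul_assoc,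
                ENNReal.inv_mul_cancel hμ0 hμtop, mul_one]
      refine ⟨q, hqpos, ?_, fun _ => hineq⟩
      -- the radius is bounded
      have hIT : ∫⁻ w in Qcyl a q z, g w ≤ T := setLIntegral_le_lintegral _ _
      have h2 : t * (ENNReal.ofReal (q ^ d) * Kc n) ≤ T := by
        rw [← volume_Qcyl ha hqpos z]; exact hineq.trans hIT
      have h3 : ENNReal.ofReal (q ^ d) ≤ T * (Kc n)⁻¹ * t⁻¹ := by
        calc ENNReal.ofReal (q ^ d)
            = t * (ENNReal.ofReal (q ^ d) * Kc n) * (Kc n)⁻¹ * t⁻¹ := by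
              have e1 : t * (ENNReal.ofReal (q ^ d) * Kc n) * (Kc n)⁻¹ * t⁻¹
                  = ENNReal.ofReal (q ^ d) * (Kc n * (Kc n)⁻¹) * (t * t⁻¹) := by ring
              rw [e1, ENNReal.mul_inv_cancel Kc_ne_zero Kc_ne_top,
                ENNReal.mul_inv_cancel ht0 httop, mul_one, mul_one]
          _ ≤ T * (Kc n)⁻¹ * t⁻¹ := by
              exact mul_le_mul_left (mul_le_mul_left h2 _) _
      have hBtop : T * (Kc n)⁻¹ * t⁻¹ ≠ ∞ :=
        ENNReal.mul_ne_top (ENNReal.mul_ne_top hTtop (ENNReal.inv_ne_top.2 Kc_ne_zero))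
          (ENNReal.inv_ne_top.2 ht0)
      have h4 : q ^ d ≤ (T * (Kc n)⁻¹ * t⁻¹).toReal :=
        (ENNReal.ofReal_le_iff_le_toReal hBtop).1 h3
      have h5 : q ≤ Rb := by
        have := Real.rpow_le_rpow (by positivity : (0:ℝ) ≤ q ^ d)
          (by linarith : q ^ d ≤ (T * (Kc n)⁻¹ * t⁻¹).toReal + 1) (by positivity : (0:ℝ) ≤ 1/d)
        rwa [← Real.rpow_mul hqpos.le, mul_one_div, div_self hdpos.ne', Real.rpow_one] at this
      exact h5.trans (le_max_left _ _)
    · exact ⟨1, one_pos, le_max_right _ _, fun h => absurd h hz⟩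
  choose rad hpos hle hineq using hsel
  obtain ⟨u, huS, hdisj, hcover⟩ :=
    Vitali.exists_disjoint_subfamily_covering_enlargement
      (B := fun z => Qcyl a (rad z) z) S rad 2 one_lt_two
      (fun z _ => (hpos z).le) (max Rb 1) (fun z _ => hle z)
      (fun z _ => ⟨z, self_mem_Qcyl ha (hpos z) z⟩)
  have hpair : Pairwise (Function.onFun Disjoint fun b : ↥u => Qcyl a (rad (b:EuclideanSpace ℝ (Fin n) × ℝ)) (b : EuclideanSpace ℝ (Fin n) × ℝ)) := by
    intro i j hij
    exact hdisj i.2 j.2 (fun h => hij (Subtype.ext h))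
  haveI hcnt : Countable ↥u := by
    have h1 := MeasureTheory.Measure.countable_meas_pos_of_disjoint_iUnion (μ := volume)
      (As := fun b : ↥u => Qcyl a (rad (b : EuclideanSpace ℝ (Fin n) × ℝ)) (b : EuclideanSpace ℝ (Fin n) × ℝ))
      (fun b => measurableSet_Qcyl ha (hpos _) _) hpair
    have h2 : {i : ↥u | 0 < volume (Qcyl a (rad (i : EuclideanSpace ℝ (Fin n) × ℝ)) (i : EuclideanSpace ℝ (Fin n) × ℝ))} = Set.univ := by
      refine Set.eq_univ_iff_forall.2 (fun b => ?_)
      exact pos_iff_ne_zero.2 (volume_Qcyl_ne_zero ha (hpos _) _)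
    rw [h2] at h1
    exact Set.countable_univ_iff.1 h1
  have hSsub : S ⊆ ⋃ b : ↥u, Qcyl a (Cvit a * rad (b : EuclideanSpace ℝ (Fin n) × ℝ)) (b : EuclideanSpace ℝ (Fin n) × ℝ) := by
    intro z hz
    obtain ⟨b, hbu, hinter, hle2⟩ := hcover z hz
    refine Set.mem_iUnion.2 ⟨⟨b, hbu⟩, ?_⟩
    exact Qcyl_subset_of_inter ha (hpos z) (hpos b) hle2 hinter (self_mem_Qcyl ha (hpos z) z)
  calc volume S ≤ volume (⋃ b : ↥u, Qcyl a (Cvit a * rad (b : EuclideanSpace ℝ (Fin n) × ℝ)) (b : EuclideanSpace ℝ (Fin n) × ℝ)) :=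
        measure_mono hSsub
    _ ≤ ∑' b : ↥u, volume (Qcyl a (Cvit a * rad (b : EuclideanSpace ℝ (Fin n) × ℝ)) (b : EuclideanSpace ℝ (Fin n) × ℝ)) :=
        measure_iUnion_le _
    _ = ∑' b : ↥u, ENNReal.ofReal ((Cvit a) ^ d) * volume (Qcyl a (rad (b : EuclideanSpace ℝ (Fin n) × ℝ)) (b : EuclideanSpace ℝ (Fin n) × ℝ)) := by
        refine tsum_congr (fun b => ?_)
        exact scale_Qcyl ha (Cvit_pos ha) (hpos _) _
    _ ≤ ∑' b : ↥u, ENNReal.ofReal ((Cvit a) ^ d) * (t⁻¹ * ∫⁻ w in Qcyl a (rad (b : EuclideanSpace ℝ (Fin n) × ℝ)) (b : EuclideanSpace ℝ (Fin n) × ℝ), g w) := by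
        refine ENNReal.tsum_le_tsum (fun b => mul_le_mul_right ?_ _)
        have hb := hineq (b : EuclideanSpace ℝ (Fin n) × ℝ) (huS b.2)
        calc volume (Qcyl a (rad (b : EuclideanSpace ℝ (Fin n) × ℝ)) (b : EuclideanSpace ℝ (Fin n) × ℝ))
            = t⁻¹ * (t * volume (Qcyl a (rad (b : EuclideanSpace ℝ (Fin n) × ℝ)) (b : EuclideanSpace ℝ (Fin n) × ℝ))) := by
              rw [← mul_assoc, ENNReal.inv_mul_cancel ht0 httop, one_mul]
          _ ≤ t⁻¹ * ∫⁻ w in Qcyl a (rad (b : EuclideanSpace ℝ (Fin n) × ℝ)) (b : EuclideanSpace ℝ (Fin n) × ℝ), g w :=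
              mul_le_mul_right hb _
    _ = ENNReal.ofReal ((Cvit a) ^ d) * t⁻¹ *
          ∑' b : ↥u, ∫⁻ w in Qcyl a (rad (b : EuclideanSpace ℝ (Fin n) × ℝ)) (b : EuclideanSpace ℝ (Fin n) × ℝ), g w := by
        rw [ENNReal.tsum_mul_left, ENNReal.tsum_mul_left, mul_assoc]
    _ ≤ ENNReal.ofReal ((Cvit a) ^ d) * t⁻¹ * T := by
        apply mul_le_mul_right
        rw [← lintegral_iUnion (fun b => measurableSet_Qcyl ha (hpos _) _) hpair g]
        exact setLIntegral_le_lintegral _ _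

lemma lc_aux {s T : ℝ} (hs : 0 < s) (hT : 0 < T) :
    ∫⁻ t in Set.Ioc (0:ℝ) T, ENNReal.ofReal (s * t ^ (s-1)) = ENNReal.ofReal (T ^ s) := by
  have hint : IntegrableOn (fun t => s * t ^ (s-1)) (Set.Ioc (0:ℝ) T) volume := by
    have h1 : IntervalIntegrable (fun t : ℝ => t ^ (s-1)) volume 0 T :=
      intervalIntegral.intervalIntegrable_rpow' (by linarith)
    have h2 : IntervalIntegrable (fun t : ℝ => s * t ^ (s-1)) volume 0 T := h1.const_mul s
    rwa [intervalIntegrable_iff_integrableOn_Ioc_of_le hT.le] at h2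
  rw [← ofReal_integral_eq_lintegral_ofReal hint]
  · congr 1
    rw [← intervalIntegral.integral_of_le hT.le]
    rw [intervalIntegral.integral_const_mul, integral_rpow (Or.inl (by linarith))]
    rw [Real.zero_rpow (by linarith : s - 1 + 1 ≠ 0)]
    have : s - 1 + 1 = s := by ring
    rw [this, sub_zero]
    field_simp
  · filter_upwards [ae_restrict_mem measurableSet_Ioc] with t ht
    have : (0:ℝ) ≤ t ^ (s-1) := Real.rpow_nonneg ht.1.le _
    positivity

lemma lc_pt {s : ℝ} (hs : 0 < s) (c : ℝ≥0∞) :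
    ∫⁻ t in Set.Ioi (0:ℝ),
      Set.indicator {t : ℝ | ENNReal.ofReal t < c} (fun t => ENNReal.ofReal (s * t^(s-1))) t
      = c ^ s := by
  rcases eq_or_ne c 0 with rfl | hc0
  · have h1 : {t : ℝ | ENNReal.ofReal t < 0} = ∅ := by
      ext t; simp
    rw [h1]
    simp [ENNReal.zero_rpow_of_pos hs]
  rcases eq_or_ne c ∞ with rfl | hctop
  · have h1 : {t : ℝ | ENNReal.ofReal t < ∞} = Set.univ := by
      ext t; simp [ENNReal.ofReal_lt_top]
    rw [h1, Set.indicator_univ, ENNReal.top_rpow_of_pos hs]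
    by_contra hcon
    set L := ∫⁻ t in Set.Ioi (0:ℝ), ENNReal.ofReal (s * t^(s-1)) with hL
    have hLtop : L ≠ ∞ := hcon
    set T : ℝ := (L.toReal + 1) ^ (1/s) with hTdef
    have hT : 0 < T := Real.rpow_pos_of_pos (by positivity) _
    have h2 : ENNReal.ofReal (T ^ s) ≤ L := by
      rw [← lc_aux hs hT]
      exact lintegral_mono_set Set.Ioc_subset_Ioi_self
    have h3 : T ^ s = L.toReal + 1 := by
      rw [hTdef, ← Real.rpow_mul (by positivity), one_div, inv_mul_cancel₀ hs.ne',
        Real.rpow_one]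
    rw [h3] at h2
    have h4 : L.toReal + 1 ≤ L.toReal := (ENNReal.ofReal_le_iff_le_toReal hLtop).1 h2
    linarith
  -- finite positive case
  set T : ℝ := c.toReal with hTdef
  have hT : 0 < T := ENNReal.toReal_pos hc0 hctop
  have hset : {t : ℝ | ENNReal.ofReal t < c} = Set.Iio T := by
    ext t
    simp only [Set.mem_setOf_eq, Set.mem_Iio]
    constructor
    · intro h
      by_cases ht : 0 ≤ t
      · exact (ENNReal.ofReal_lt_iff_lt_toReal ht hctop).1 h
      · linarith [not_le.1 ht]
    · intro h
      by_cases ht : 0 ≤ t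
      · exact (ENNReal.ofReal_lt_iff_lt_toReal ht hctop).2 h
      · rw [ENNReal.ofReal_of_nonpos (by linarith [not_le.1 ht])]
        exact pos_iff_ne_zero.2 hc0
  rw [hset, lintegral_indicator measurableSet_Iio, Measure.restrict_restrict measurableSet_Iio]
  have hIoo : Set.Iio T ∩ Set.Ioi (0:ℝ) = Set.Ioo 0 T := by
    ext t; simp only [Set.mem_inter_iff, Set.mem_Iio, Set.mem_Ioi, Set.mem_Ioo]; tauto
  rw [hIoo]
  have hcongr : ∫⁻ t in Set.Ioo (0:ℝ) T, ENNReal.ofReal (s * t^(s-1)) =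
      ∫⁻ t in Set.Ioc (0:ℝ) T, ENNReal.ofReal (s * t^(s-1)) := by
    rw [Measure.restrict_congr_set Ioo_ae_eq_Ioc]
  rw [hcongr, lc_aux hs hT]
  have : c = ENNReal.ofReal T := (ENNReal.ofReal_toReal hctop).symm
  rw [this, ← ENNReal.ofReal_rpow_of_pos hT]

lemma layercake {s : ℝ} (hs : 0 < s) {h : EuclideanSpace ℝ (Fin n) × ℝ → ℝ≥0∞}
    (hh : Measurable h) :
    ∫⁻ z, (h z) ^ s = ∫⁻ t in Set.Ioi (0:ℝ),
      ENNReal.ofReal (s * t^(s-1)) * volume {z | ENNReal.ofReal t < h z} := by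
  have hpt : ∀ z, (h z) ^ s = ∫⁻ t in Set.Ioi (0:ℝ),
      Set.indicator {t : ℝ | ENNReal.ofReal t < h z}
        (fun t => ENNReal.ofReal (s * t^(s-1))) t := fun z => (lc_pt hs _).symm
  rw [lintegral_congr hpt]
  have hker : Measurable (Function.uncurry fun (z : EuclideanSpace ℝ (Fin n) × ℝ) (t : ℝ) =>
      Set.indicator {t : ℝ | ENNReal.ofReal t < h z}
        (fun t => ENNReal.ofReal (s * t^(s-1))) t) := by
    have hA : MeasurableSet {q : (EuclideanSpace ℝ (Fin n) × ℝ) × ℝ |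
        ENNReal.ofReal q.2 < h q.1} :=
      measurableSet_lt (ENNReal.measurable_ofReal.comp measurable_snd) (hh.comp measurable_fst)
    have heq : (Function.uncurry fun (z : EuclideanSpace ℝ (Fin n) × ℝ) (t : ℝ) =>
        Set.indicator {t : ℝ | ENNReal.ofReal t < h z}
          (fun t => ENNReal.ofReal (s * t^(s-1))) t) =
        Set.indicator {q : (EuclideanSpace ℝ (Fin n) × ℝ) × ℝ | ENNReal.ofReal q.2 < h q.1}
          (fun q => ENNReal.ofReal (s * q.2^(s-1))) := by
      ext q
      by_cases hq : ENNReal.ofReal q.2 < h q.1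
      · rw [Function.uncurry]
        rw [Set.indicator_of_mem (by exact hq), Set.indicator_of_mem (by exact hq)]
      · rw [Function.uncurry]
        rw [Set.indicator_of_notMem (by exact hq), Set.indicator_of_notMem (by exact hq)]
    rw [heq]
    exact (((measurable_snd.pow measurable_const).const_mul s).ennreal_ofReal).indicator hA
  rw [lintegral_lintegral_swap hker.aemeasurable]
  apply lintegral_congr
  intro t
  have heq2 : ∀ z : EuclideanSpace ℝ (Fin n) × ℝ,
      Set.indicator {t' : ℝ | ENNReal.ofReal t' < h z}
        (fun t' => ENNReal.ofReal (s * t'^(s-1))) t =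
      Set.indicator {z' : EuclideanSpace ℝ (Fin n) × ℝ | ENNReal.ofReal t < h z'}
        (fun _ => ENNReal.ofReal (s * t^(s-1))) z := by
    intro z
    by_cases hz : ENNReal.ofReal t < h z
    · rw [Set.indicator_of_mem (by exact hz), Set.indicator_of_mem (by exact hz)]
    · rw [Set.indicator_of_notMem (by exact hz), Set.indicator_of_notMem (by exact hz)]
  rw [lintegral_congr heq2]
  rw [lintegral_indicator_const (measurableSet_lt measurable_const hh)]

lemma rpow_sub_one_mul_self {p : ℝ} (hp : 1 < p) (x : ℝ≥0∞) : x ^ (p-1) * x = x ^ p := by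
  rcases eq_or_ne x 0 with rfl | hx0
  · rw [ENNReal.zero_rpow_of_pos (by linarith), ENNReal.zero_rpow_of_pos (by linarith), mul_zero]
  rcases eq_or_ne x ∞ with rfl | hxtop
  · rw [ENNReal.top_rpow_of_pos (by linarith), ENNReal.top_rpow_of_pos (by linarith),
      ENNReal.top_mul_top]
  · calc x ^ (p-1) * x = x ^ (p-1) * x ^ (1:ℝ) := by rw [ENNReal.rpow_one]
      _ = x ^ (p-1+1) := (ENNReal.rpow_add _ _ hx0 hxtop).symm
      _ = x ^ p := by norm_num

theorem strong_type (ha : 0 < a) {p : ℝ} (hp : 1 < p)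
    {g : EuclideanSpace ℝ (Fin n) × ℝ → ℝ≥0∞} (hg : Measurable g) :
    ∫⁻ z, (ME a g z) ^ p ≤
      (2:ℝ≥0∞)^p * ENNReal.ofReal ((Cvit a) ^ ((n:ℝ)+2*a)) * ENNReal.ofReal (p/(p-1)) *
        ∫⁻ w, (g w) ^ p := by
  set d := (n:ℝ) + 2*a with hd
  set D := ENNReal.ofReal ((Cvit a) ^ d) with hD
  have hp0 : (0:ℝ) < p := by linarith
  have hp1 : (0:ℝ) < p - 1 := by linarith
  -- the good-lambda / splitting bound for the distribution function
  have key : ∀ t : ℝ, 0 < t → volume {z : EuclideanSpace ℝ (Fin n) × ℝ |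
      ENNReal.ofReal t < ME a g z} ≤ 2 * D * (ENNReal.ofReal t)⁻¹ *
        ∫⁻ w, Set.indicator {w' : EuclideanSpace ℝ (Fin n) × ℝ |
          ENNReal.ofReal t < 2 * g w'} g w := by
    intro t ht
    set c := ENNReal.ofReal t with hc
    have hc0 : c ≠ 0 := by simp [hc, ENNReal.ofReal_eq_zero, not_le, ht]
    have hctop : c ≠ ∞ := ENNReal.ofReal_ne_top
    set g1 : EuclideanSpace ℝ (Fin n) × ℝ → ℝ≥0∞ :=
      Set.indicator {w' : EuclideanSpace ℝ (Fin n) × ℝ | c < 2 * g w'} g with hg1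
    have hsetm : MeasurableSet {w' : EuclideanSpace ℝ (Fin n) × ℝ | c < 2 * g w'} :=
      measurableSet_lt measurable_const (hg.const_mul 2)
    have hg1m : Measurable g1 := hg.indicator hsetm
    have hptw : ∀ w, g w ≤ g1 w + c/2 := by
      intro w
      by_cases hw : c < 2 * g w
      · rw [hg1, Set.indicator_of_mem (by exact hw)]; exact le_self_add
      · rw [hg1, Set.indicator_of_notMem (by exact hw), zero_add]
        have h2 : 2 * g w ≤ c := not_lt.1 hw
        exact (ENNReal.le_div_iff_mul_le (Or.inl two_ne_zero)
          (Or.inl ENNReal.ofNat_ne_top)).2 (by rwa [mul_comm])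
    have hME : ∀ z, ME a g z ≤ ME a g1 z + c/2 := by
      intro z
      apply iSup_le
      rintro ⟨q, hq⟩
      have hqpos : (0:ℝ) < ((q:ℚ):ℝ) := by exact_mod_cast hq
      have hμ0 := volume_Qcyl_ne_zero ha hqpos z
      have hμtop := volume_Qcyl_ne_top ha hqpos z
      have h1 : avgE a g ((q:ℚ):ℝ) z ≤ avgE a g1 ((q:ℚ):ℝ) z + c/2 := by
        calc avgE a g ((q:ℚ):ℝ) z
            ≤ (volume (Qcyl a ((q:ℚ):ℝ) z))⁻¹ *
              ∫⁻ w in Qcyl a ((q:ℚ):ℝ) z, (g1 w + c/2) :=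
              mul_le_mul_right (lintegral_mono (fun w => hptw w)) _
          _ = (volume (Qcyl a ((q:ℚ):ℝ) z))⁻¹ *
              ((∫⁻ w in Qcyl a ((q:ℚ):ℝ) z, g1 w) + (c/2) * volume (Qcyl a ((q:ℚ):ℝ) z)) := by
              rw [lintegral_add_right _ measurable_const, setLIntegral_const]
          _ = avgE a g1 ((q:ℚ):ℝ) z +
              (volume (Qcyl a ((q:ℚ):ℝ) z))⁻¹ * ((c/2) * volume (Qcyl a ((q:ℚ):ℝ) z)) := by
              rw [mul_add]; rfl
          _ = avgE a g1 ((q:ℚ):ℝ) z + c/2 := by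
              rw [mul_comm (c/2), ← mul_assoc, ENNReal.inv_mul_cancel hμ0 hμtop, one_mul]
      refine h1.trans (add_le_add_left ?_ _)
      exact le_iSup (fun q' : {q' : ℚ // 0 < q'} => avgE a g1 ((q':ℚ):ℝ) z) ⟨q, hq⟩
    have hsub : {z : EuclideanSpace ℝ (Fin n) × ℝ | c < ME a g z} ⊆
        {z : EuclideanSpace ℝ (Fin n) × ℝ | c/2 < ME a g1 z} := by
      intro z hz
      by_contra hcon
      have h2 : ME a g z ≤ c :=
        (hME z).trans (by
          calc ME a g1 z + c/2 ≤ c/2 + c/2 := add_le_add_left (not_lt.1 hcon) _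
            _ = c := ENNReal.add_halves c)
      exact absurd hz (not_lt.2 h2)
    have hhalf0 : c/2 ≠ 0 := by
      rw [Ne, ENNReal.div_eq_zero_iff]
      push_neg
      exact ⟨hc0, ENNReal.ofNat_ne_top⟩
    have hhalftop : c/2 ≠ ∞ := by
      exact ne_top_of_le_ne_top hctop (ENNReal.half_le_self)
    have hw := weak_type ha (g := g1) hhalf0 hhalftop
    have hinv : (c/2)⁻¹ = 2 * c⁻¹ := by
      rw [ENNReal.div_eq_inv_mul, ENNReal.mul_inv (Or.inr hctop) (Or.inl (by simp)), inv_inv,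
        mul_comm]
    calc volume {z : EuclideanSpace ℝ (Fin n) × ℝ | c < ME a g z}
        ≤ volume {z : EuclideanSpace ℝ (Fin n) × ℝ | c/2 < ME a g1 z} := measure_mono hsub
      _ ≤ D * (c/2)⁻¹ * ∫⁻ w, g1 w := hw
      _ = 2 * D * c⁻¹ * ∫⁻ w, g1 w := by rw [hinv]; ring_nf
  -- layercake and Fubini
  have hMEm : Measurable (ME a g) := measurable_ME ha hg
  rw [layercake hp0 hMEm]
  set H : ℝ → EuclideanSpace ℝ (Fin n) × ℝ → ℝ≥0∞ := fun t w =>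
    Set.indicator {t' : ℝ | ENNReal.ofReal t' < 2 * g w}
      (fun t' => ENNReal.ofReal ((p-1) * t'^(p-1-1))) t * g w with hH
  have hHm : Measurable (Function.uncurry H) := by
    have hA : MeasurableSet {q : ℝ × (EuclideanSpace ℝ (Fin n) × ℝ) |
        ENNReal.ofReal q.1 < 2 * g q.2} :=
      measurableSet_lt (ENNReal.measurable_ofReal.comp measurable_fst)
        ((hg.comp measurable_snd).const_mul 2)
    have heq : Function.uncurry H =
        fun q : ℝ × (EuclideanSpace ℝ (Fin n) × ℝ) =>
          Set.indicator {q' : ℝ × (EuclideanSpace ℝ (Fin n) × ℝ) |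
            ENNReal.ofReal q'.1 < 2 * g q'.2}
            (fun q' => ENNReal.ofReal ((p-1) * q'.1^(p-1-1))) q * g q.2 := by
      ext q
      by_cases hq : ENNReal.ofReal q.1 < 2 * g q.2
      · rw [Function.uncurry, hH]
        simp only
        rw [Set.indicator_of_mem (by exact hq), Set.indicator_of_mem (by exact hq)]
      · rw [Function.uncurry, hH]
        simp only
        rw [Set.indicator_of_notMem (by exact hq), Set.indicator_of_notMem (by exact hq)]
    rw [heq]
    exact ((((measurable_fst.pow measurable_const).const_mul
      (p-1)).ennreal_ofReal).indicator hA).mul (hg.comp measurable_snd)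
  have hswap := lintegral_lintegral_swap (μ := volume.restrict (Set.Ioi (0:ℝ)))
    (ν := (volume : Measure (EuclideanSpace ℝ (Fin n) × ℝ))) hHm.aemeasurable
  -- compute the inner integral of H in t
  have hinner : ∀ w : EuclideanSpace ℝ (Fin n) × ℝ,
      ∫⁻ t in Set.Ioi (0:ℝ), H t w = (2 * g w) ^ (p-1) * g w := by
    intro w
    rw [hH]
    simp only
    rw [lintegral_mul_const _ (by
      exact ((measurable_id.pow measurable_const).const_mul (p-1)).ennreal_ofReal.indicator
        (measurableSet_lt ENNReal.measurable_ofReal measurable_const))]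
    rw [lc_pt hp1 (2 * g w)]
  -- compute the inner integral of H in w, for fixed t > 0
  have hinner2 : ∀ t : ℝ, 0 < t → ∫⁻ w, H t w =
      ENNReal.ofReal ((p-1) * t^(p-1-1)) *
        ∫⁻ w, Set.indicator {w' : EuclideanSpace ℝ (Fin n) × ℝ |
          ENNReal.ofReal t < 2 * g w'} g w := by
    intro t ht
    have heqw : ∀ w : EuclideanSpace ℝ (Fin n) × ℝ, H t w =
        ENNReal.ofReal ((p-1) * t^(p-1-1)) *
          Set.indicator {w' : EuclideanSpace ℝ (Fin n) × ℝ |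
            ENNReal.ofReal t < 2 * g w'} g w := by
      intro w
      rw [hH]
      simp only
      by_cases hw : ENNReal.ofReal t < 2 * g w
      · rw [Set.indicator_of_mem (by exact hw), Set.indicator_of_mem (by exact hw)]
      · rw [Set.indicator_of_notMem (by exact hw), Set.indicator_of_notMem (by exact hw),
          zero_mul, mul_zero]
    rw [lintegral_congr heqw]
    exact lintegral_const_mul _ (hg.indicator (measurableSet_lt measurable_const
      (hg.const_mul 2)))
  -- put everything together
  calc ∫⁻ t in Set.Ioi (0:ℝ), ENNReal.ofReal (p * t^(p-1)) *
        volume {z : EuclideanSpace ℝ (Fin n) × ℝ | ENNReal.ofReal t < ME a g z}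
      ≤ ∫⁻ t in Set.Ioi (0:ℝ), (2 * D * ENNReal.ofReal (p/(p-1))) * ∫⁻ w, H t w := by
        apply setLIntegral_mono' measurableSet_Ioi
        intro t ht
        rw [Set.mem_Ioi] at ht
        rw [hinner2 t ht]
        calc ENNReal.ofReal (p * t^(p-1)) *
              volume {z : EuclideanSpace ℝ (Fin n) × ℝ | ENNReal.ofReal t < ME a g z}
            ≤ ENNReal.ofReal (p * t^(p-1)) * (2 * D * (ENNReal.ofReal t)⁻¹ *
              ∫⁻ w, Set.indicator {w' : EuclideanSpace ℝ (Fin n) × ℝ |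
                ENNReal.ofReal t < 2 * g w'} g w) := mul_le_mul_right (key t ht) _
          _ = (2 * D * ENNReal.ofReal (p/(p-1))) *
              (ENNReal.ofReal ((p-1) * t^(p-1-1)) *
              ∫⁻ w, Set.indicator {w' : EuclideanSpace ℝ (Fin n) × ℝ |
                ENNReal.ofReal t < 2 * g w'} g w) := by
              have hofr : ENNReal.ofReal (p * t^(p-1)) * (ENNReal.ofReal t)⁻¹ =
                  ENNReal.ofReal (p/(p-1)) * ENNReal.ofReal ((p-1) * t^(p-1-1)) := by
                rw [mul_comm, ← ENNReal.div_eq_inv_mul, ← ENNReal.ofReal_div_of_pos ht,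
                  ← ENNReal.ofReal_mul (by positivity : (0:ℝ) ≤ p/(p-1))]
                congr 1
                rw [Real.rpow_sub ht (p-1) 1, Real.rpow_one]
                have hpne : p - 1 ≠ 0 := hp1.ne'
                have htne : t ≠ 0 := ht.ne'
                field_simp
              calc ENNReal.ofReal (p * t^(p-1)) * (2 * D * (ENNReal.ofReal t)⁻¹ *
                    ∫⁻ w, Set.indicator {w' : EuclideanSpace ℝ (Fin n) × ℝ |
                      ENNReal.ofReal t < 2 * g w'} g w)
                  = (2 * D) * ((ENNReal.ofReal (p * t^(p-1)) * (ENNReal.ofReal t)⁻¹) *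
                    ∫⁻ w, Set.indicator {w' : EuclideanSpace ℝ (Fin n) × ℝ |
                      ENNReal.ofReal t < 2 * g w'} g w) := by ring
                _ = (2 * D * ENNReal.ofReal (p/(p-1))) *
                    (ENNReal.ofReal ((p-1) * t^(p-1-1)) *
                    ∫⁻ w, Set.indicator {w' : EuclideanSpace ℝ (Fin n) × ℝ |
                      ENNReal.ofReal t < 2 * g w'} g w) := by rw [hofr]; ring
    _ = (2 * D * ENNReal.ofReal (p/(p-1))) * ∫⁻ t in Set.Ioi (0:ℝ), ∫⁻ w, H t w :=
        lintegral_const_mul' _ _ (by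
          apply ENNReal.mul_ne_top
          · exact ENNReal.mul_ne_top (by simp) ENNReal.ofReal_ne_top
          · exact ENNReal.ofReal_ne_top)
    _ = (2 * D * ENNReal.ofReal (p/(p-1))) * ∫⁻ w, ∫⁻ t in Set.Ioi (0:ℝ), H t w := by
        rw [hswap]
    _ = (2 * D * ENNReal.ofReal (p/(p-1))) * ∫⁻ w, (2 * g w) ^ (p-1) * g w := by
        rw [lintegral_congr hinner]
    _ ≤ (2:ℝ≥0∞)^p * D * ENNReal.ofReal (p/(p-1)) * ∫⁻ w, (g w) ^ p := by
        have hptwise : ∀ w : EuclideanSpace ℝ (Fin n) × ℝ,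
            (2 * g w) ^ (p-1) * g w = (2:ℝ≥0∞)^(p-1) * (g w) ^ p := by
          intro w
          rw [ENNReal.mul_rpow_of_nonneg _ _ (by linarith : (0:ℝ) ≤ p-1), mul_assoc,
            rpow_sub_one_mul_self hp (g w)]
        rw [lintegral_congr hptwise,
          lintegral_const_mul _ (hg.pow measurable_const)]
        have h2p : (2:ℝ≥0∞)^p = 2 * (2:ℝ≥0∞)^(p-1) := by
          have : p = 1 + (p-1) := by ring
          rw [this]
          rw [ENNReal.rpow_add 1 (p-1) two_ne_zero ENNReal.ofNat_ne_top, ENNReal.rpow_one]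
          ring_nf
        rw [h2p]
        apply le_of_eq
        ring

lemma add_rpow_le_two_rpow (x y : ℝ≥0∞) {p : ℝ} (hp : 0 ≤ p) :
    (x + y) ^ p ≤ (2:ℝ≥0∞)^p * (x ^ p + y ^ p) := by
  have h1 : x + y ≤ 2 * max x y := by
    rw [two_mul]
    exact add_le_add (le_max_left x y) (le_max_right x y)
  have h2 : (max x y) ^ p ≤ x ^ p + y ^ p := by
    rcases le_total x y with h | h
    · rw [max_eq_right h]; exact le_add_self
    · rw [max_eq_left h]; exact le_self_add
  calc (x + y) ^ p ≤ (2 * max x y) ^ p := ENNReal.rpow_le_rpow h1 hp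
    _ = (2:ℝ≥0∞)^p * (max x y) ^ p := ENNReal.mul_rpow_of_nonneg _ _ hp
    _ ≤ (2:ℝ≥0∞)^p * (x ^ p + y ^ p) := mul_le_mul_right h2 _

end MorreyAux

open MorreyAux

/-- the fractional parabolic maximal operator `M₀` is bounded on the
fractional parabolic Morrey space `M^{p,λ}(ℝ^{n+1})`. -/
theorem maximal_bounded_on_morrey (n : ℕ) (a p lam : ℝ) (ha₀ : 0 < a) (ha₁ : a ≤ 1)
    (hp₀ : 1 < p) (hlam₀ : 0 < lam) (hlam₁ : lam ≤ (n : ℝ) + 2 * a) :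
    ∃ C : ℝ, 0 < C ∧ ∀ f : EuclideanSpace ℝ (Fin n) × ℝ → ℝ,
      Measurable f → morreyNorm a p lam f < ⊤ →
        morreyNorm a p lam (maxOp a 0 f) ≤ ENNReal.ofReal C * morreyNorm a p lam f := by
  have hp0 : (0:ℝ) < p := by linarith
  set d : ℝ := (n : ℝ) + 2 * a with hd
  have hdpos : 0 < d := by positivity
  set E : ℝ≥0∞ := ENNReal.ofReal (2 ^ d) with hE
  set Ap : ℝ≥0∞ := (2:ℝ≥0∞)^p * ENNReal.ofReal ((Cvit a) ^ d) * ENNReal.ofReal (p/(p-1))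
    with hAp
  have hk := kap_pos ha₀
  set Ctot : ℝ≥0∞ := E^p * (2:ℝ≥0∞)^p *
    (Ap * ENNReal.ofReal ((2 * kap a) ^ (d - lam)) + 1) with hCtot
  have h2top : (2:ℝ≥0∞)^p ≠ ∞ := ENNReal.rpow_ne_top_of_nonneg hp0.le ENNReal.ofNat_ne_top
  have hCtop : Ctot ≠ ∞ := by
    apply ENNReal.mul_ne_top
    · exact ENNReal.mul_ne_top
        (ENNReal.rpow_ne_top_of_nonneg hp0.le ENNReal.ofReal_ne_top) h2top
    · apply ENNReal.add_ne_top.2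
      refine ⟨ENNReal.mul_ne_top ?_ ENNReal.ofReal_ne_top, ENNReal.one_ne_top⟩
      exact ENNReal.mul_ne_top (ENNReal.mul_ne_top h2top ENNReal.ofReal_ne_top)
        ENNReal.ofReal_ne_top
  refine ⟨Ctot.toReal ^ (1/p) + 1, by positivity, ?_⟩
  intro f hf hN
  set F : EuclideanSpace ℝ (Fin n) × ℝ → ℝ≥0∞ := fun w => ENNReal.ofReal (|f w|) with hF
  have hFm : Measurable F := hf.abs.ennreal_ofReal
  have hFp : ∀ w, (F w) ^ p = ENNReal.ofReal (|f w| ^ p) := fun w =>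
    ENNReal.ofReal_rpow_of_nonneg (abs_nonneg _) hp0.le
  set S : ℝ≥0∞ := ⨆ (r : ℝ) (_ : 0 < r) (z : EuclideanSpace ℝ (Fin n) × ℝ),
      ENNReal.ofReal (r ^ (lam - d)) *
        ∫⁻ w in Qcyl a r z, ENNReal.ofReal (|f w| ^ p) with hS
  have hSnorm : morreyNorm a p lam f = S ^ (1/p) := rfl
  -- Morrey control of local integrals of |f|^p
  have hMor : ∀ ρ : ℝ, 0 < ρ → ∀ y : EuclideanSpace ℝ (Fin n) × ℝ,
      ∫⁻ w in Qcyl a ρ y, (F w) ^ p ≤ ENNReal.ofReal (ρ ^ (d - lam)) * S := by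
    intro ρ hρ y
    have hx0 : ENNReal.ofReal (ρ ^ (lam - d)) ≠ 0 := by
      simp [ENNReal.ofReal_eq_zero, not_le]
      exact Real.rpow_pos_of_pos hρ _
    have hxtop : ENNReal.ofReal (ρ ^ (lam - d)) ≠ ∞ := ENNReal.ofReal_ne_top
    have hterm : ENNReal.ofReal (ρ ^ (lam - d)) *
        ∫⁻ w in Qcyl a ρ y, ENNReal.ofReal (|f w| ^ p) ≤ S := by
      rw [hS]
      refine le_trans (le_iSup (fun z => ENNReal.ofReal (ρ ^ (lam - d)) *
        ∫⁻ w in Qcyl a ρ z, ENNReal.ofReal (|f w| ^ p)) y) ?_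
      refine le_trans (le_iSup (fun _ : 0 < ρ => ⨆ z, ENNReal.ofReal (ρ ^ (lam - d)) *
        ∫⁻ w in Qcyl a ρ z, ENNReal.ofReal (|f w| ^ p)) hρ) ?_
      exact le_iSup (fun r => ⨆ (_ : 0 < r), ⨆ z, ENNReal.ofReal (r ^ (lam - d)) *
        ∫⁻ w in Qcyl a r z, ENNReal.ofReal (|f w| ^ p)) ρ
    have hinv : (ENNReal.ofReal (ρ ^ (lam - d)))⁻¹ = ENNReal.ofReal (ρ ^ (d - lam)) := by
      rw [← ENNReal.ofReal_inv_of_pos (Real.rpow_pos_of_pos hρ _),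
        ← Real.rpow_neg hρ.le, neg_sub]
    calc ∫⁻ w in Qcyl a ρ y, (F w) ^ p
        = ∫⁻ w in Qcyl a ρ y, ENNReal.ofReal (|f w| ^ p) := by
          exact lintegral_congr (fun w => hFp w)
      _ = (ENNReal.ofReal (ρ ^ (lam - d)))⁻¹ * (ENNReal.ofReal (ρ ^ (lam - d)) *
          ∫⁻ w in Qcyl a ρ y, ENNReal.ofReal (|f w| ^ p)) := by
          rw [← mul_assoc, ENNReal.inv_mul_cancel hx0 hxtop, one_mul]
      _ ≤ (ENNReal.ofReal (ρ ^ (lam - d)))⁻¹ * S := mul_le_mul_right hterm _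
      _ = ENNReal.ofReal (ρ ^ (d - lam)) * S := by rw [hinv]
  -- bound of the Morrey quantity of the maximal function, cylinder by cylinder
  have hSM : (⨆ (r : ℝ) (_ : 0 < r) (z : EuclideanSpace ℝ (Fin n) × ℝ),
      ENNReal.ofReal (r ^ (lam - d)) *
        ∫⁻ w in Qcyl a r z, ENNReal.ofReal (|maxOp a 0 f w| ^ p)) ≤ Ctot * S := by
    refine iSup_le fun r => iSup_le fun hr => iSup_le fun z0 => ?_
    have h2kr : (0:ℝ) < 2 * kap a * r := by positivity
    set F1 : EuclideanSpace ℝ (Fin n) × ℝ → ℝ≥0∞ :=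
      (Qcyl a (2 * kap a * r) z0).indicator F with hF1
    have hF1m : Measurable F1 := hFm.indicator (measurableSet_Qcyl ha₀ h2kr z0)
    set V : ℝ≥0∞ := ((Kc n)⁻¹ * ENNReal.ofReal (r ^ (-lam)) * S) ^ (1/p) with hV
    -- pointwise bound on the cylinder
    have hpt : ∀ w ∈ Qcyl a r z0, ENNReal.ofReal (|maxOp a 0 f w| ^ p) ≤
        E^p * ((2:ℝ≥0∞)^p * ((ME a F1 w)^p + V^p)) := by
      intro w hw
      have hstep2 : ME a F w ≤ ME a F1 w + V := by
        apply iSup_le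
        rintro ⟨q, hq⟩
        have hqpos : (0:ℝ) < ((q:ℚ):ℝ) := by exact_mod_cast hq
        rcases le_or_gt ((q:ℚ):ℝ) r with hqr | hrq
        · have hsub : Qcyl a ((q:ℚ):ℝ) w ⊆ Qcyl a (2 * kap a * r) z0 := by
            refine (Qcyl_engulf ha₀ hr hqpos hw).trans (Qcyl_mono ?_ _)
            nlinarith [hk.le]
          have heq : avgE a F ((q:ℚ):ℝ) w = avgE a F1 ((q:ℚ):ℝ) w := by
            unfold avgE
            congr 1
            apply setLIntegral_congr_fun (measurableSet_Qcyl ha₀ hqpos w)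
            intro x hx
            rw [hF1, Set.indicator_of_mem (hsub hx)]
          rw [heq]
          exact le_trans (le_iSup (fun q' : {q' : ℚ // 0 < q'} =>
            avgE a F1 ((q':ℚ):ℝ) w) ⟨q, hq⟩) le_self_add
        · -- large radii: use the Morrey bound through Hölder
          have hH := avgE_le_holder ha₀ hqpos hp₀ hFm w
          have hMq := hMor ((q:ℚ):ℝ) hqpos w
          have hbound : (volume (Qcyl a ((q:ℚ):ℝ) w))⁻¹ *
              ∫⁻ x in Qcyl a ((q:ℚ):ℝ) w, (F x) ^ p ≤
              (Kc n)⁻¹ * ENNReal.ofReal (r ^ (-lam)) * S := by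
            rw [volume_Qcyl ha₀ hqpos w]
            have hq0 : ENNReal.ofReal (((q:ℚ):ℝ) ^ d) ≠ 0 := by
              simp [ENNReal.ofReal_eq_zero, not_le]
              exact Real.rpow_pos_of_pos hqpos _
            have hinv2 : (ENNReal.ofReal (((q:ℚ):ℝ) ^ d) * Kc n)⁻¹ =
                ENNReal.ofReal (((q:ℚ):ℝ) ^ (-d)) * (Kc n)⁻¹ := by
              rw [ENNReal.mul_inv (Or.inl hq0) (Or.inl ENNReal.ofReal_ne_top),
                ← ENNReal.ofReal_inv_of_pos (Real.rpow_pos_of_pos hqpos _),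
                ← Real.rpow_neg hqpos.le]
            rw [hinv2]
            calc ENNReal.ofReal (((q:ℚ):ℝ) ^ (-d)) * (Kc n)⁻¹ *
                ∫⁻ x in Qcyl a ((q:ℚ):ℝ) w, (F x) ^ p
                ≤ ENNReal.ofReal (((q:ℚ):ℝ) ^ (-d)) * (Kc n)⁻¹ *
                  (ENNReal.ofReal (((q:ℚ):ℝ) ^ (d - lam)) * S) := mul_le_mul_right hMq _
              _ = (Kc n)⁻¹ * (ENNReal.ofReal (((q:ℚ):ℝ) ^ (-d)) *
                  ENNReal.ofReal (((q:ℚ):ℝ) ^ (d - lam))) * S := by ring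
              _ = (Kc n)⁻¹ * ENNReal.ofReal (((q:ℚ):ℝ) ^ (-lam)) * S := by
                  rw [← ENNReal.ofReal_mul (Real.rpow_nonneg hqpos.le _),
                    ← Real.rpow_add hqpos]
                  ring_nf
              _ ≤ (Kc n)⁻¹ * ENNReal.ofReal (r ^ (-lam)) * S := by
                  refine mul_le_mul_left (mul_le_mul_right (ENNReal.ofReal_le_ofReal ?_) _) _
                  exact Real.rpow_le_rpow_of_nonpos hr hrq.le (by linarith)
          have : avgE a F ((q:ℚ):ℝ) w ≤ V := by
            refine hH.trans ?_
            rw [hV]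
            exact ENNReal.rpow_le_rpow hbound (by positivity)
          exact this.trans (self_le_add_left V (ME a F1 w))
      -- assemble pointwise
      have hmo := maxOp_nonneg a f w
      rw [abs_of_nonneg hmo, ← ENNReal.ofReal_rpow_of_nonneg hmo hp0.le]
      calc (ENNReal.ofReal (maxOp a 0 f w)) ^ p
          ≤ (E * ME a F w) ^ p := ENNReal.rpow_le_rpow (ofReal_maxOp_le ha₀ w) hp0.le
        _ ≤ (E * (ME a F1 w + V)) ^ p :=
            ENNReal.rpow_le_rpow (mul_le_mul_right hstep2 _) hp0.le
        _ = E^p * (ME a F1 w + V) ^ p := ENNReal.mul_rpow_of_nonneg _ _ hp0.le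
        _ ≤ E^p * ((2:ℝ≥0∞)^p * ((ME a F1 w)^p + V^p)) :=
            mul_le_mul_right (add_rpow_le_two_rpow _ _ hp0.le) _
    -- integrate the pointwise bound
    have hint : ∫⁻ w in Qcyl a r z0, ENNReal.ofReal (|maxOp a 0 f w| ^ p) ≤
        E^p * (2:ℝ≥0∞)^p * ((∫⁻ w, (ME a F1 w)^p) + V^p * volume (Qcyl a r z0)) := by
      have hmono : ∫⁻ w in Qcyl a r z0, ENNReal.ofReal (|maxOp a 0 f w| ^ p) ≤
          ∫⁻ w in Qcyl a r z0, E^p * ((2:ℝ≥0∞)^p * ((ME a F1 w)^p + V^p)) :=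
        setLIntegral_mono (by
          exact (((((measurable_ME ha₀ hF1m).pow measurable_const).add
            measurable_const).const_mul _).const_mul _)) hpt
      refine hmono.trans ?_
      rw [lintegral_const_mul' _ _ (ENNReal.rpow_ne_top_of_nonneg hp0.le ENNReal.ofReal_ne_top)]
      rw [lintegral_const_mul' _ _ h2top]
      rw [lintegral_add_right _ measurable_const, setLIntegral_const]
      rw [← mul_assoc]
      apply mul_le_mul_right
      exact add_le_add_left (setLIntegral_le_lintegral _ _) _
    -- bound the global maximal integral via the strong type estimate
    have hstrong : ∫⁻ w, (ME a F1 w)^p ≤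
        Ap * (ENNReal.ofReal ((2 * kap a) ^ (d - lam)) * (ENNReal.ofReal (r ^ (d - lam)) * S)) := by
      have h1 := strong_type ha₀ hp₀ hF1m
      have h2 : ∫⁻ w, (F1 w) ^ p ≤
          ENNReal.ofReal ((2 * kap a) ^ (d - lam)) * (ENNReal.ofReal (r ^ (d - lam)) * S) := by
        have heq : ∀ w, (F1 w) ^ p =
            (Qcyl a (2 * kap a * r) z0).indicator (fun x => (F x) ^ p) w := by
          intro w
          rw [hF1]
          by_cases hwq : w ∈ Qcyl a (2 * kap a * r) z0
          · rw [Set.indicator_of_mem hwq, Set.indicator_of_mem hwq]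
          · rw [Set.indicator_of_notMem hwq, Set.indicator_of_notMem hwq,
              ENNReal.zero_rpow_of_pos hp0]
        rw [lintegral_congr heq, lintegral_indicator (measurableSet_Qcyl ha₀ h2kr z0)]
        refine (hMor _ h2kr z0).trans (le_of_eq ?_)
        rw [Real.mul_rpow (by positivity) hr.le,
          ENNReal.ofReal_mul (Real.rpow_nonneg (by positivity) _), mul_assoc]
      calc ∫⁻ w, (ME a F1 w)^p ≤ Ap * ∫⁻ w, (F1 w) ^ p := h1
        _ ≤ Ap * (ENNReal.ofReal ((2 * kap a) ^ (d - lam)) *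
            (ENNReal.ofReal (r ^ (d - lam)) * S)) := mul_le_mul_right h2 _
    -- the constant term
    have hVterm : V^p * volume (Qcyl a r z0) = ENNReal.ofReal (r ^ (d - lam)) * S := by
      have hVp : V^p = (Kc n)⁻¹ * ENNReal.ofReal (r ^ (-lam)) * S := by
        rw [hV, ← ENNReal.rpow_mul, one_div, inv_mul_cancel₀ hp0.ne', ENNReal.rpow_one]
      rw [hVp, volume_Qcyl ha₀ hr z0]
      have h1 : ENNReal.ofReal (r ^ (-lam)) * ENNReal.ofReal (r ^ d) =
          ENNReal.ofReal (r ^ (d - lam)) := by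
        rw [← ENNReal.ofReal_mul (Real.rpow_nonneg hr.le _), ← Real.rpow_add hr]
        norm_num
        ring_nf
      calc (Kc n)⁻¹ * ENNReal.ofReal (r ^ (-lam)) * S * (ENNReal.ofReal (r ^ d) * Kc n)
          = ((Kc n)⁻¹ * Kc n) * (ENNReal.ofReal (r ^ (-lam)) * ENNReal.ofReal (r ^ d)) * S := by
            ring
        _ = ENNReal.ofReal (r ^ (d - lam)) * S := by
            rw [ENNReal.inv_mul_cancel Kc_ne_zero Kc_ne_top, one_mul, h1]
    -- combine
    have hfinal : ∫⁻ w in Qcyl a r z0, ENNReal.ofReal (|maxOp a 0 f w| ^ p) ≤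
        Ctot * (ENNReal.ofReal (r ^ (d - lam)) * S) := by
      refine hint.trans ?_
      rw [hCtot]
      calc E^p * (2:ℝ≥0∞)^p * ((∫⁻ w, (ME a F1 w)^p) + V^p * volume (Qcyl a r z0))
          ≤ E^p * (2:ℝ≥0∞)^p *
            (Ap * (ENNReal.ofReal ((2 * kap a) ^ (d - lam)) *
              (ENNReal.ofReal (r ^ (d - lam)) * S)) +
             ENNReal.ofReal (r ^ (d - lam)) * S) := by
            exact mul_le_mul_right (add_le_add hstrong (le_of_eq hVterm)) _
        _ = E^p * (2:ℝ≥0∞)^p * ((Ap * ENNReal.ofReal ((2 * kap a) ^ (d - lam)) + 1) *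
            (ENNReal.ofReal (r ^ (d - lam)) * S)) := by ring
        _ = E^p * (2:ℝ≥0∞)^p * (Ap * ENNReal.ofReal ((2 * kap a) ^ (d - lam)) + 1) *
            (ENNReal.ofReal (r ^ (d - lam)) * S) := by ring
    have hcancel : ENNReal.ofReal (r ^ (lam - d)) * ENNReal.ofReal (r ^ (d - lam)) = 1 := by
      rw [← ENNReal.ofReal_mul (Real.rpow_nonneg hr.le _), ← Real.rpow_add hr]
      norm_num
    calc ENNReal.ofReal (r ^ (lam - d)) *
        ∫⁻ w in Qcyl a r z0, ENNReal.ofReal (|maxOp a 0 f w| ^ p)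
        ≤ ENNReal.ofReal (r ^ (lam - d)) * (Ctot * (ENNReal.ofReal (r ^ (d - lam)) * S)) :=
          mul_le_mul_right hfinal _
      _ = (ENNReal.ofReal (r ^ (lam - d)) * ENNReal.ofReal (r ^ (d - lam))) * (Ctot * S) := by
          ring
      _ = Ctot * S := by rw [hcancel, one_mul]
  -- conclude
  have hgoal : morreyNorm a p lam (maxOp a 0 f) ≤ (Ctot * S) ^ (1/p) := by
    rw [morreyNorm]
    exact ENNReal.rpow_le_rpow hSM (by positivity)
  refine hgoal.trans ?_
  rw [ENNReal.mul_rpow_of_nonneg _ _ (by positivity : (0:ℝ) ≤ 1/p), hSnorm]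
  apply mul_le_mul_left
  calc Ctot ^ (1/p) = (ENNReal.ofReal Ctot.toReal) ^ (1/p) := by
        rw [ENNReal.ofReal_toReal hCtop]
    _ = ENNReal.ofReal (Ctot.toReal ^ (1/p)) :=
        ENNReal.ofReal_rpow_of_nonneg ENNReal.toReal_nonneg (by positivity)
    _ ≤ ENNReal.ofReal (Ctot.toReal ^ (1/p) + 1) := ENNReal.ofReal_le_ofReal (by linarith)


end
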